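/- Every positive concave function f : ℝ₊^K → ℝ₊₊ is a standard interference function; i.e., it is monotone (p ≥ q implies f(p) ≥ f(q)) and satisfies α·f(p) > f(α·p) for every p ∈ ℝ₊^K and every α > 1. -/

import Mathlib

/-- `f` is a standard interference function on `ℝ₊^K`. -/
def IsStdIF {K : ℕ} (f : (Fin K → ℝ) → ℝ) : Prop :=
  (∀ p : Fin K → ℝ, (∀ i, 0 ≤ p i) → 0 < f p) ∧
  (∀ p q : Fin K → ℝ, (∀ i, 0 ≤ q i) → (∀ i, q i ≤ p i) → f q ≤ f p) ∧
  (∀ p : Fin K → ℝ, (∀ i, 0 ≤ p i) → ∀ α : ℝ, 1 < α → f (α • p) < α * f p)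

theorem stmt0 {K : ℕ} (f : (Fin K → ℝ) → ℝ)
    (hpos : ∀ p : Fin K → ℝ, (∀ i, 0 ≤ p i) → 0 < f p)
    (hconc : ∀ x y : Fin K → ℝ, (∀ i, 0 ≤ x i) → (∀ i, 0 ≤ y i) →
      ∀ t : ℝ, 0 ≤ t → t ≤ 1 →
        t * f x + (1 - t) * f y ≤ f (t • x + (1 - t) • y)) :
    IsStdIF f := by
  refine ⟨hpos, ?_, ?_⟩
  · -- monotonicity
    intro p q hq hle
    by_contra hlt
    push_neg at hlt
    have hq0 : ∀ i, 0 ≤ q i := hq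
    have hp0 : ∀ i, 0 ≤ p i := fun i => le_trans (hq i) (hle i)
    have hfq : 0 < f q := hpos q hq0
    have hfp : 0 < f p := hpos p hp0
    have hd : 0 < f q - f p := by linarith
    set s : ℝ := f q / (f q - f p) with hs
    have hs1 : 1 < s := (one_lt_div hd).2 (by linarith)
    have hs0 : 0 < s := lt_trans one_pos hs1
    set x : Fin K → ℝ := fun i => q i + s * (p i - q i) with hx
    have hx0 : ∀ i, 0 ≤ x i := fun i => by
      have := hle i
      have := hq i
      have : 0 ≤ s * (p i - q i) := mul_nonneg hs0.le (by linarith)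
      simp only [hx]; linarith [hq i]
    have ht0 : (0:ℝ) ≤ 1 / s := by positivity
    have ht1 : 1 / s ≤ 1 := by
      rw [div_le_one hs0]; linarith
    have key := hconc x q hx0 hq0 (1 / s) ht0 ht1
    have heq : (1 / s) • x + (1 - 1 / s) • q = p := by
      funext i
      simp only [hx, Pi.add_apply, Pi.smul_apply, smul_eq_mul]
      field_simp
      ring
    rw [heq] at key
    have hfx : 0 < f x := hpos x hx0
    have : f p > (1 - 1 / s) * f q := by nlinarith [mul_pos (show (0:ℝ) < 1/s by positivity) hfx]
    have hsv : (1 - 1 / s) * f q = f p := by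
      rw [hs]
      field_simp
      ring
    linarith
  · -- scalability
    intro p hp α hα
    have hα0 : 0 < α := lt_trans one_pos hα
    have hx0 : ∀ i, 0 ≤ (α • p) i := fun i => by
      simp only [Pi.smul_apply, smul_eq_mul]; exact mul_nonneg hα0.le (hp i)
    have hz0 : ∀ i, 0 ≤ (0 : Fin K → ℝ) i := fun i => le_refl 0
    have ht0 : (0:ℝ) ≤ 1 / α := by positivity
    have ht1 : 1 / α ≤ 1 := by rw [div_le_one hα0]; linarith
    have key := hconc (α • p) 0 hx0 hz0 (1 / α) ht0 ht1
    have heq : (1 / α) • (α • p) + (1 - 1 / α) • (0 : Fin K → ℝ) = p := by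
      funext i
      simp only [Pi.add_apply, Pi.smul_apply, smul_eq_mul, Pi.zero_apply]
      field_simp
      ring
    rw [heq] at key
    have hf0 : 0 < f 0 := hpos 0 hz0
    have h1 : 0 < 1 - 1 / α := by
      have : 1 / α < 1 := by rw [div_lt_one hα0]; linarith
      linarith
    have : (1 / α) * f (α • p) < f p := by nlinarith
    calc f (α • p) = α * ((1 / α) * f (α • p)) := by field_simp
      _ < α * f p := by exact (mul_lt_mul_iff_right₀ hα0).2 this
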